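/- Let A and N be symmetric positive definite matrices and set β* = (λ_min(N) + λ_max(N))/2. Then (λ_max(N) - β*)/(λ_min(A) + β*) < 1; consequently ‖(A + β*I)⁻¹(β*I - N)‖ < 1 in spectral norm. -/

import Mathlib

open Matrix
open scoped Matrix.Norms.L2Operator

noncomputable def specNorm {n : ℕ} (A : Matrix (Fin n) (Fin n) ℝ) : ℝ :=
  ‖Matrix.toEuclideanCLM (𝕜 := ℝ) A‖

noncomputable def lamMin {n : ℕ} [NeZero n] {A : Matrix (Fin n) (Fin n) ℝ}
    (hA : A.IsHermitian) : ℝ :=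
  Finset.univ.inf' Finset.univ_nonempty hA.eigenvalues

noncomputable def lamMax {n : ℕ} [NeZero n] {A : Matrix (Fin n) (Fin n) ℝ}
    (hA : A.IsHermitian) : ℝ :=
  Finset.univ.sup' Finset.univ_nonempty hA.eigenvalues


lemma diag_norm_le {n : ℕ} (v : Fin n → ℝ) (c : ℝ) (hc : 0 ≤ c) (h : ∀ i, |v i| ≤ c) :
    ‖(diagonal v : Matrix (Fin n) (Fin n) ℝ)‖ ≤ c := by
  rw [l2_opNorm_def]
  refine ContinuousLinearMap.opNorm_le_bound _ hc fun x => ?_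
  simp only [LinearEquiv.trans_apply, LinearMap.coe_toContinuousLinearMap',
    LinearEquiv.coe_coe, toEuclideanLin_apply]
  have hx : ∀ y : EuclideanSpace ℝ (Fin n), ‖y‖ = Real.sqrt (∑ i, (y i)^2) := by
    intro y; simp [EuclideanSpace.norm_eq, Real.norm_eq_abs, sq_abs]
  rw [hx, hx, ← Real.sqrt_sq hc, ← Real.sqrt_mul (sq_nonneg c)]
  apply Real.sqrt_le_sqrt
  rw [Finset.mul_sum]
  apply Finset.sum_le_sum
  intro i _
  have h1 : (WithLp.toLp 2 (diagonal v *ᵥ x.ofLp) : EuclideanSpace ℝ (Fin n)) i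
      = v i * x i := by
    simp [mulVec_diagonal]
  rw [h1, mul_pow]
  have h2 : (v i)^2 ≤ c^2 := by
    rw [← sq_abs]
    exact pow_le_pow_left₀ (abs_nonneg _) (h i) 2
  nlinarith [sq_nonneg (x i)]

lemma unitary_norm_one {n : ℕ} [NeZero n] (U : Matrix.unitaryGroup (Fin n) ℝ) :
    ‖(U : Matrix (Fin n) (Fin n) ℝ)‖ = 1 := by
  have h1 : ‖(1 : Matrix (Fin n) (Fin n) ℝ)‖ = 1 := by
    rw [cstar_norm_def, _root_.map_one]
    exact ContinuousLinearMap.norm_id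
  have h2 : ((U : Matrix (Fin n) (Fin n) ℝ)ᴴ) * U = 1 := by
    rw [← star_eq_conjTranspose]
    exact Unitary.coe_star_mul_self U
  have := l2_opNorm_conjTranspose_mul_self (U : Matrix (Fin n) (Fin n) ℝ)
  rw [h2, h1] at this
  nlinarith [norm_nonneg (U : Matrix (Fin n) (Fin n) ℝ)]

lemma herm_norm_le {n : ℕ} [NeZero n] {M : Matrix (Fin n) (Fin n) ℝ} (hM : M.IsHermitian)
    (c : ℝ) (hc : 0 ≤ c) (h : ∀ i, |hM.eigenvalues i| ≤ c) : ‖M‖ ≤ c := by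
  have hd : (diagonal ((RCLike.ofReal : ℝ → ℝ) ∘ hM.eigenvalues) : Matrix (Fin n) (Fin n) ℝ)
      = diagonal hM.eigenvalues := by rfl
  calc ‖M‖ = ‖(hM.eigenvectorUnitary : Matrix (Fin n) (Fin n) ℝ) *
        diagonal ((RCLike.ofReal : ℝ → ℝ) ∘ hM.eigenvalues) *
        (star hM.eigenvectorUnitary : Matrix (Fin n) (Fin n) ℝ)‖ := by
        conv_lhs => rw [hM.spectral_theorem, Unitary.conjStarAlgAut_apply]
    _ ≤ ‖(hM.eigenvectorUnitary : Matrix (Fin n) (Fin n) ℝ) *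
        diagonal ((RCLike.ofReal : ℝ → ℝ) ∘ hM.eigenvalues)‖ *
        ‖(star hM.eigenvectorUnitary : Matrix (Fin n) (Fin n) ℝ)‖ := l2_opNorm_mul _ _
    _ ≤ ‖(hM.eigenvectorUnitary : Matrix (Fin n) (Fin n) ℝ)‖ *
        ‖diagonal ((RCLike.ofReal : ℝ → ℝ) ∘ hM.eigenvalues)‖ *
        ‖(star hM.eigenvectorUnitary : Matrix (Fin n) (Fin n) ℝ)‖ :=
        mul_le_mul_of_nonneg_right (l2_opNorm_mul _ _) (norm_nonneg _)
    _ ≤ c := by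
        rw [hd]
        have hu := unitary_norm_one hM.eigenvectorUnitary
        have hus : ‖(star hM.eigenvectorUnitary : Matrix (Fin n) (Fin n) ℝ)‖ = 1 := by
          rw [star_eq_conjTranspose, l2_opNorm_conjTranspose]; exact hu
        rw [hu, hus, one_mul, mul_one]
        exact diag_norm_le _ _ hc h

lemma conj_diag_norm_le {n : ℕ} [NeZero n] (U : Matrix.unitaryGroup (Fin n) ℝ)
    (v : Fin n → ℝ) (c : ℝ) (hc : 0 ≤ c) (h : ∀ i, |v i| ≤ c) :
    ‖(U : Matrix (Fin n) (Fin n) ℝ) * diagonal v * (star U : Matrix (Fin n) (Fin n) ℝ)‖ ≤ c := by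
  have hus : ‖(star U : Matrix (Fin n) (Fin n) ℝ)‖ = 1 := by
    rw [star_eq_conjTranspose, l2_opNorm_conjTranspose]; exact unitary_norm_one U
  calc ‖(U : Matrix (Fin n) (Fin n) ℝ) * diagonal v * (star U : Matrix (Fin n) (Fin n) ℝ)‖
      ≤ ‖(U : Matrix (Fin n) (Fin n) ℝ) * diagonal v‖ *
        ‖(star U : Matrix (Fin n) (Fin n) ℝ)‖ := l2_opNorm_mul _ _
    _ ≤ ‖(U : Matrix (Fin n) (Fin n) ℝ)‖ * ‖(diagonal v : Matrix (Fin n) (Fin n) ℝ)‖ *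
        ‖(star U : Matrix (Fin n) (Fin n) ℝ)‖ :=
        mul_le_mul_of_nonneg_right (l2_opNorm_mul _ _) (norm_nonneg _)
    _ ≤ c := by
        rw [unitary_norm_one U, hus, one_mul, mul_one]
        exact diag_norm_le _ _ hc h

/-- For `A, N` SPD and `β* = (λ_min(N)+λ_max(N))/2`, one has
`(λ_max(N) - β*)/(λ_min(A) + β*) < 1` and `‖(A + β*I)⁻¹(β*I - N)‖ < 1`. -/
theorem specNorm_lt_one_of_optimal_beta {n : ℕ} [NeZero n]
    (A N : Matrix (Fin n) (Fin n) ℝ)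
    (hA : A.PosDef) (hN : N.PosDef)
    (β : ℝ) (hβ : β = (lamMin hN.1 + lamMax hN.1) / 2) :
    (lamMax hN.1 - β) / (lamMin hA.1 + β) < 1 ∧
      specNorm ((A + β • 1)⁻¹ * (β • 1 - N)) < 1 := by
  obtain ⟨i0, -⟩ := Finset.univ_nonempty (α := Fin n).exists_mem
  have hNe : ∀ i, 0 < hN.1.eigenvalues i := hN.eigenvalues_pos
  have hAe : ∀ i, 0 < hA.1.eigenvalues i := hA.eigenvalues_pos
  have hNmin : ∀ i, lamMin hN.1 ≤ hN.1.eigenvalues i :=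
    fun i => Finset.inf'_le _ (Finset.mem_univ i)
  have hNmax : ∀ i, hN.1.eigenvalues i ≤ lamMax hN.1 :=
    fun i => Finset.le_sup' _ (Finset.mem_univ i)
  have hAmin : ∀ i, lamMin hA.1 ≤ hA.1.eigenvalues i :=
    fun i => Finset.inf'_le _ (Finset.mem_univ i)
  have hNminpos : 0 < lamMin hN.1 := Finset.lt_inf'_iff _ |>.mpr fun i _ => hNe i
  have hAminpos : 0 < lamMin hA.1 := Finset.lt_inf'_iff _ |>.mpr fun i _ => hAe i
  have hminmax : lamMin hN.1 ≤ lamMax hN.1 := (hNmin i0).trans (hNmax i0)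
  have hβpos : 0 < β := by rw [hβ]; linarith
  have hdenpos : 0 < lamMin hA.1 + β := by linarith
  constructor
  · rw [div_lt_one hdenpos]; linarith
  · set U := hN.1.eigenvectorUnitary with hU
    set V := hA.1.eigenvectorUnitary with hV
    have hdN : (diagonal ((RCLike.ofReal : ℝ → ℝ) ∘ hN.1.eigenvalues) : Matrix (Fin n) (Fin n) ℝ)
        = diagonal hN.1.eigenvalues := by rfl
    have hdA : (diagonal ((RCLike.ofReal : ℝ → ℝ) ∘ hA.1.eigenvalues) : Matrix (Fin n) (Fin n) ℝ)
        = diagonal hA.1.eigenvalues := by rfl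
    have hUU : (U : Matrix (Fin n) (Fin n) ℝ) * star (U : Matrix (Fin n) (Fin n) ℝ) = 1 :=
      mem_unitaryGroup_iff.mp U.2
    have hVV : (V : Matrix (Fin n) (Fin n) ℝ) * star (V : Matrix (Fin n) (Fin n) ℝ) = 1 :=
      mem_unitaryGroup_iff.mp V.2
    have hVV' : star (V : Matrix (Fin n) (Fin n) ℝ) * (V : Matrix (Fin n) (Fin n) ℝ) = 1 :=
      mem_unitaryGroup_iff'.mp V.2
    have hsmul : ∀ r : ℝ, r • (1 : Matrix (Fin n) (Fin n) ℝ) = diagonal (fun _ => r) := by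
      intro r
      ext i j
      by_cases hij : i = j <;> simp [hij, Matrix.one_apply, Matrix.diagonal_apply]
    have hNdec : β • (1 : Matrix (Fin n) (Fin n) ℝ) - N =
        (U : Matrix (Fin n) (Fin n) ℝ) * diagonal (fun i => β - hN.1.eigenvalues i) *
          star (U : Matrix (Fin n) (Fin n) ℝ) := by
      have h1 : (diagonal (fun i => β - hN.1.eigenvalues i) : Matrix (Fin n) (Fin n) ℝ)
          = β • (1 : Matrix (Fin n) (Fin n) ℝ) - diagonal hN.1.eigenvalues := by
        rw [hsmul, ← diagonal_sub]
      rw [h1, mul_sub, sub_mul, mul_smul_comm, smul_mul_assoc, mul_one, hUU, ← hdN]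
      congr 1
      exact hN.1.spectral_theorem.trans (Unitary.conjStarAlgAut_apply _ _)
    have hAdec : A + β • (1 : Matrix (Fin n) (Fin n) ℝ) =
        (V : Matrix (Fin n) (Fin n) ℝ) * diagonal (fun i => hA.1.eigenvalues i + β) *
          star (V : Matrix (Fin n) (Fin n) ℝ) := by
      have h1 : (diagonal (fun i => hA.1.eigenvalues i + β) : Matrix (Fin n) (Fin n) ℝ)
          = diagonal hA.1.eigenvalues + β • (1 : Matrix (Fin n) (Fin n) ℝ) := by
        rw [hsmul, ← diagonal_add]
      rw [h1, mul_add, add_mul, mul_smul_comm, smul_mul_assoc, mul_one, hVV, ← hdA]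
      congr 1
      exact hA.1.spectral_theorem.trans (Unitary.conjStarAlgAut_apply _ _)
    have hkey : (A + β • (1 : Matrix (Fin n) (Fin n) ℝ)) *
        ((V : Matrix (Fin n) (Fin n) ℝ) * diagonal (fun i => (hA.1.eigenvalues i + β)⁻¹) *
          star (V : Matrix (Fin n) (Fin n) ℝ)) = 1 := by
      rw [hAdec]
      have h2 : star (V : Matrix (Fin n) (Fin n) ℝ) * ((V : Matrix (Fin n) (Fin n) ℝ) *
          (diagonal (fun i => (hA.1.eigenvalues i + β)⁻¹) * star (V : Matrix (Fin n) (Fin n) ℝ)))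
          = diagonal (fun i => (hA.1.eigenvalues i + β)⁻¹) *
            star (V : Matrix (Fin n) (Fin n) ℝ) := by
        rw [← mul_assoc, hVV', one_mul]
      simp only [mul_assoc]
      rw [h2, ← mul_assoc (diagonal _), diagonal_mul_diagonal]
      have h3 : (fun i => (hA.1.eigenvalues i + β) * (hA.1.eigenvalues i + β)⁻¹)
          = fun _ : Fin n => (1 : ℝ) := by
        funext i
        exact mul_inv_cancel₀ (by have := hAe i; positivity)
      have h4 : (diagonal (fun _ : Fin n => (1 : ℝ)) : Matrix (Fin n) (Fin n) ℝ) = 1 :=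
        diagonal_one
      rw [h3, h4, one_mul, hVV]
    have hinv : (A + β • (1 : Matrix (Fin n) (Fin n) ℝ))⁻¹ =
        (V : Matrix (Fin n) (Fin n) ℝ) * diagonal (fun i => (hA.1.eigenvalues i + β)⁻¹) *
          star (V : Matrix (Fin n) (Fin n) ℝ) := inv_eq_right_inv hkey
    have hb1 : ‖(A + β • (1 : Matrix (Fin n) (Fin n) ℝ))⁻¹‖ ≤ (lamMin hA.1 + β)⁻¹ := by
      rw [hinv]
      refine conj_diag_norm_le V _ _ (by positivity) fun i => ?_
      rw [abs_of_pos (inv_pos.mpr (by have := hAe i; linarith))]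
      exact inv_anti₀ hdenpos (by linarith [hAmin i])
    have hb2 : ‖β • (1 : Matrix (Fin n) (Fin n) ℝ) - N‖ ≤ (lamMax hN.1 - lamMin hN.1) / 2 := by
      rw [hNdec]
      refine conj_diag_norm_le U _ _ (by linarith) fun i => ?_
      rw [abs_le]
      constructor
      · linarith [hNmax i]
      · linarith [hNmin i]
    show ‖(A + β • (1 : Matrix (Fin n) (Fin n) ℝ))⁻¹ * (β • 1 - N)‖ < 1
    calc ‖(A + β • (1 : Matrix (Fin n) (Fin n) ℝ))⁻¹ * (β • 1 - N)‖
        ≤ ‖(A + β • (1 : Matrix (Fin n) (Fin n) ℝ))⁻¹‖ *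
          ‖β • (1 : Matrix (Fin n) (Fin n) ℝ) - N‖ := l2_opNorm_mul _ _
      _ ≤ (lamMin hA.1 + β)⁻¹ * ((lamMax hN.1 - lamMin hN.1) / 2) :=
          mul_le_mul hb1 hb2 (norm_nonneg _) (by positivity)
      _ < (lamMin hA.1 + β)⁻¹ * (lamMin hA.1 + β) := by
          apply mul_lt_mul_of_pos_left _ (inv_pos.mpr hdenpos)
          linarith
      _ = 1 := inv_mul_cancel₀ (ne_of_gt hdenpos)
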